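/- (KKL theorem) There exists a constant c > 0 such that for every n ≥ 2 and every Boolean function f : {-1,1}^n → {-1,1}, there is some k ∈ [n] with I_k(f) ≥ c·Var(f)·(log n)/n. -/

import Mathlib

open Finset

noncomputable def bSgn (b : Bool) : ℝ := if b then 1 else -1

noncomputable def bChi {n : ℕ} (S : Finset (Fin n)) (x : Fin n → Bool) : ℝ :=
  ∏ i ∈ S, bSgn (x i)

noncomputable def bExpect {n : ℕ} (g : (Fin n → Bool) → ℝ) : ℝ :=
  (∑ x : Fin n → Bool, g x) / 2 ^ n

noncomputable def bFourier {n : ℕ} (f : (Fin n → Bool) → ℝ) (S : Finset (Fin n)) : ℝ :=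
  bExpect fun x => f x * bChi S x

def bFlip1 {n : ℕ} (k : Fin n) (x : Fin n → Bool) : Fin n → Bool :=
  Function.update x k (!(x k))

def bFlipS {n : ℕ} (T : Finset (Fin n)) (x : Fin n → Bool) : Fin n → Bool :=
  fun i => if i ∈ T then !(x i) else x i

noncomputable def inflC {n : ℕ} (f : (Fin n → Bool) → ℝ) (k : Fin n) : ℝ :=
  bExpect fun x => if f x ≠ f (bFlip1 k x) then 1 else 0

noncomputable def inflS {n : ℕ} (f : (Fin n → Bool) → ℝ) (k : Fin n) : ℝ :=
  ∑ S ∈ univ.filter (fun S : Finset (Fin n) => k ∈ S), bFourier f S ^ 2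

noncomputable def totInfl {n : ℕ} (f : (Fin n → Bool) → ℝ) : ℝ :=
  ∑ S : Finset (Fin n), (S.card : ℝ) * bFourier f S ^ 2

noncomputable def specEnt {n : ℕ} (f : (Fin n → Bool) → ℝ) : ℝ :=
  ∑ S : Finset (Fin n), bFourier f S ^ 2 * Real.logb 2 (1 / bFourier f S ^ 2)

def IsBooleanFn {n : ℕ} (f : (Fin n → Bool) → ℝ) : Prop :=
  ∀ x, f x = 1 ∨ f x = -1

noncomputable def varF {n : ℕ} (f : (Fin n → Bool) → ℝ) : ℝ :=
  ∑ S ∈ univ.filter (fun S : Finset (Fin n) => S ≠ ∅), bFourier f S ^ 2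

lemma bSgn_sq (b : Bool) : bSgn b * bSgn b = 1 := by cases b <;> simp [bSgn]

lemma bSgn_mul_ne {a b : Bool} (h : a ≠ b) : bSgn a * bSgn b = -1 := by
  cases a <;> cases b <;> simp_all [bSgn]

/-- key delta lemma: ∑_S χ_S x χ_S y = 2^n if x = y else 0 -/
lemma sum_chi_mul_chi {n : ℕ} (x y : Fin n → Bool) :
    ∑ S : Finset (Fin n), bChi S x * bChi S y = if x = y then (2:ℝ)^n else 0 := by
  have h1 : ∀ S : Finset (Fin n), bChi S x * bChi S y = ∏ i ∈ S, (bSgn (x i) * bSgn (y i)) := by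
    intro S; rw [bChi, bChi, ← Finset.prod_mul_distrib]
  simp only [h1]
  have h2 := Fintype.prod_add (fun i : Fin n => bSgn (x i) * bSgn (y i)) (fun _ => (1:ℝ))
  -- ∏ (c i + 1) = ∑ t, ∏_{t} c * ∏_{tᶜ} 1
  simp only [Finset.prod_const_one, mul_one] at h2
  rw [← h2]
  by_cases hxy : x = y
  · subst hxy
    simp only [bSgn_sq, if_pos rfl]
    rw [Finset.prod_const]
    norm_num
  · rw [if_neg hxy]
    obtain ⟨i, hi⟩ : ∃ i, x i ≠ y i := by
      by_contra h; push_neg at h; exact hxy (funext h)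
    apply Finset.prod_eq_zero (Finset.mem_univ i)
    rw [bSgn_mul_ne hi]; ring

/-- Parseval -/
lemma bParseval {n : ℕ} (f g : (Fin n → Bool) → ℝ) :
    bExpect (fun x => f x * g x) = ∑ S : Finset (Fin n), bFourier f S * bFourier g S := by
  have : ∀ S : Finset (Fin n), bFourier f S * bFourier g S
      = (∑ x : Fin n → Bool, ∑ y : Fin n → Bool,
          f x * g y * (bChi S x * bChi S y)) / (2^n * 2^n) := by
    intro S
    rw [bFourier, bFourier, bExpect, bExpect, div_mul_div_comm, Finset.sum_mul_sum]
    congr 1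
    apply Finset.sum_congr rfl; intro x _
    apply Finset.sum_congr rfl; intro y _
    ring
  simp only [this]
  rw [← Finset.sum_div]
  rw [Finset.sum_comm]
  have hswap : ∀ x : Fin n → Bool,
      ∑ S : Finset (Fin n), ∑ y : Fin n → Bool, f x * g y * (bChi S x * bChi S y)
      = ∑ y : Fin n → Bool, f x * g y * (if x = y then (2:ℝ)^n else 0) := by
    intro x
    rw [Finset.sum_comm]
    apply Finset.sum_congr rfl; intro y _
    rw [← Finset.mul_sum, sum_chi_mul_chi]
  simp only [hswap, mul_ite, mul_zero, Finset.sum_ite_eq, Finset.mem_univ, if_pos]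
  rw [bExpect]
  rw [eq_div_iff (by positivity), Finset.sum_div, Finset.sum_mul]
  apply Finset.sum_congr rfl; intro x _
  field_simp

lemma sum_bChi {n : ℕ} (U : Finset (Fin n)) (hU : U ≠ ∅) :
    ∑ x : Fin n → Bool, bChi U x = 0 := by
  have h1 : ∀ x : Fin n → Bool,
      bChi U x = ∏ i : Fin n, (if i ∈ U then bSgn (x i) else 1) := by
    intro x; rw [bChi, ← Finset.prod_filter]
    congr 1
    simp [Finset.filter_mem_eq_inter]
  simp only [h1]
  rw [← Fintype.prod_sum (fun i (b : Bool) => if i ∈ U then bSgn b else 1)]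
  obtain ⟨i, hi⟩ := Finset.nonempty_iff_ne_empty.2 hU
  apply Finset.prod_eq_zero (Finset.mem_univ i)
  simp [hi, bSgn]

lemma bChi_mul_bChi {n : ℕ} (S T : Finset (Fin n)) (x : Fin n → Bool) :
    bChi S x * bChi T x = bChi (symmDiff S T) x := by
  classical
  rw [bChi, bChi, bChi]
  rw [← Finset.prod_union_inter]
  have hu : S ∪ T = (symmDiff S T) ∪ (S ∩ T) := by
    ext i; simp [Finset.mem_symmDiff]; tauto
  have hd : Disjoint (symmDiff S T) (S ∩ T) := by
    rw [Finset.disjoint_left]; intro a ha hb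
    simp [Finset.mem_symmDiff] at ha
    simp at hb
    tauto
  rw [hu, Finset.prod_union hd, mul_assoc]
  have : (∏ i ∈ S ∩ T, bSgn (x i)) * ∏ i ∈ S ∩ T, bSgn (x i) = 1 := by
    rw [← Finset.prod_mul_distrib]
    exact Finset.prod_eq_one (fun i _ => bSgn_sq (x i))
  rw [this, mul_one]

lemma bExpect_chi_mul_chi {n : ℕ} (S T : Finset (Fin n)) :
    bExpect (fun x => bChi S x * bChi T x) = if S = T then 1 else 0 := by
  simp only [bChi_mul_bChi]
  by_cases h : S = T
  · subst h
    simp only [symmDiff_self, if_pos rfl]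
    have : ∀ x : Fin n → Bool, bChi (⊥ : Finset (Fin n)) x = 1 := by
      intro x; rw [bChi]; simp
    rw [bExpect]; simp only [this]
    rw [Finset.sum_const]
    simp
  · rw [if_neg h, bExpect, sum_bChi _ (fun hc => h (symmDiff_eq_bot.mp hc))]
    simp

lemma bFourier_combo {n : ℕ} (c : Finset (Fin n) → ℝ) (T : Finset (Fin n)) :
    bFourier (fun x => ∑ S : Finset (Fin n), c S * bChi S x) T = c T := by
  rw [bFourier]
  have : ∀ x : Fin n → Bool,
      (∑ S : Finset (Fin n), c S * bChi S x) * bChi T x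
      = ∑ S : Finset (Fin n), c S * (bChi S x * bChi T x) := by
    intro x; rw [Finset.sum_mul]; apply Finset.sum_congr rfl; intros; ring
  simp only [this]
  rw [bExpect, Finset.sum_comm]
  have : ∀ S : Finset (Fin n),
      ∑ x : Fin n → Bool, c S * (bChi S x * bChi T x)
      = c S * ((if S = T then 1 else 0) * 2^n) := by
    intro S
    rw [← Finset.mul_sum]
    congr 1
    have := bExpect_chi_mul_chi S T
    rw [bExpect, div_eq_iff (by positivity)] at this
    exact this
  simp only [this, mul_ite, mul_one, mul_zero, ite_mul, zero_mul, Finset.sum_ite_eq,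
    Finset.mem_univ, if_pos]
  field_simp
  simp only [Finset.sum_ite_eq, Finset.sum_ite_eq', Finset.mem_univ, if_true]
  ring

/-- three-function Hölder-type step for {0,±1}-valued g -/
lemma holder3 {X : Type*} [Fintype X] (g h : X → ℝ)
    (hg : ∀ x, g x = 0 ∨ g x = 1 ∨ g x = -1) :
    (∑ x : X, g x * h x)^4 ≤ (∑ x : X, g x^2)^3 * ∑ x : X, h x^4 := by
  set p : X → ℝ := fun x => g x ^ 2 with hp
  have hp1 : ∀ x, p x * p x = p x := by
    intro x; rcases hg x with h' | h' | h' <;> simp [hp, h'] <;> norm_num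
  have hp0 : ∀ x, 0 ≤ p x := fun x => sq_nonneg _
  have habs : ∀ x, |g x| = p x := by
    intro x; rcases hg x with h' | h' | h' <;> simp [hp, h'] <;> norm_num
  have step1 : (∑ x : X, g x * h x)^2 ≤ (∑ x : X, p x * |h x|)^2 := by
    apply sq_le_sq'
    · rw [← Finset.sum_neg_distrib]
      apply Finset.sum_le_sum
      intro x _
      have : |g x * h x| ≤ p x * |h x| := by rw [abs_mul, habs]
      nlinarith [abs_nonneg (g x * h x), neg_abs_le (g x * h x)]
    · apply Finset.sum_le_sum
      intro x _
      calc g x * h x ≤ |g x * h x| := le_abs_self _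
        _ = p x * |h x| := by rw [abs_mul, habs]
  have step2 : (∑ x : X, p x * |h x|)^2 ≤ (∑ x : X, p x) * ∑ x : X, p x * h x ^ 2 := by
    apply Finset.sum_sq_le_sum_mul_sum_of_sq_eq_mul
    · intro x _; exact hp0 x
    · intro x _; positivity
    · intro x _
      rw [mul_pow, ← hp1 x]
      rw [sq_abs]
      ring
  have step3 : (∑ x : X, p x * h x ^ 2)^2 ≤ (∑ x : X, p x) * ∑ x : X, h x ^ 4 := by
    apply Finset.sum_sq_le_sum_mul_sum_of_sq_eq_mul
    · intro x _; exact hp0 x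
    · intro x _; positivity
    · intro x _
      have h2 : p x ^ 2 = p x := by rw [sq]; exact hp1 x
      calc (p x * h x ^ 2)^2 = p x ^ 2 * h x ^ 4 := by ring
        _ = p x * h x ^ 4 := by rw [h2]
  have hP : 0 ≤ ∑ x : X, p x := Finset.sum_nonneg (fun x _ => hp0 x)
  have hP2 : 0 ≤ ∑ x : X, p x * h x ^ 2 := Finset.sum_nonneg (fun x _ => by positivity)
  calc (∑ x : X, g x * h x)^4 = ((∑ x : X, g x * h x)^2)^2 := by ring
    _ ≤ ((∑ x : X, p x * |h x|)^2)^2 := by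
        apply pow_le_pow_left₀ (sq_nonneg _) step1
    _ ≤ ((∑ x : X, p x) * ∑ x : X, p x * h x ^ 2)^2 := by
        apply pow_le_pow_left₀ (sq_nonneg _) step2
    _ = (∑ x : X, p x)^2 * (∑ x : X, p x * h x ^ 2)^2 := by ring
    _ ≤ (∑ x : X, p x)^2 * ((∑ x : X, p x) * ∑ x : X, h x ^ 4) := by
        apply mul_le_mul_of_nonneg_left step3 (by positivity)
    _ = (∑ x : X, p x)^3 * ∑ x : X, h x ^ 4 := by ring

noncomputable def bD {n : ℕ} (k : Fin n) (f : (Fin n → Bool) → ℝ) (x : Fin n → Bool) : ℝ :=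
  (f x - f (bFlip1 k x)) / 2

lemma bFlip1_involutive {n : ℕ} (k : Fin n) : Function.Involutive (bFlip1 k) := by
  intro x
  funext i
  by_cases h : i = k
  · subst h; simp [bFlip1, Function.update_self]
  · simp [bFlip1, Function.update_of_ne h]

lemma bChi_flip {n : ℕ} (k : Fin n) (S : Finset (Fin n)) (y : Fin n → Bool) :
    bChi S (bFlip1 k y) = (if k ∈ S then -1 else 1) * bChi S y := by
  have h1 : ∀ i ∈ S, bSgn (bFlip1 k y i) = (if i = k then (-1:ℝ) else 1) * bSgn (y i) := by
    intro i _
    by_cases h : i = k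
    · subst h
      simp only [bFlip1, Function.update_self, if_pos rfl]
      cases y i <;> simp [bSgn]
    · simp [bFlip1, Function.update_of_ne h, h]
  rw [bChi, Finset.prod_congr rfl h1, Finset.prod_mul_distrib, ← bChi]
  congr 1
  rw [Finset.prod_ite_eq' S k (fun _ => (-1:ℝ))]

lemma bFourier_comp_flip {n : ℕ} (k : Fin n) (f : (Fin n → Bool) → ℝ) (S : Finset (Fin n)) :
    bFourier (fun x => f (bFlip1 k x)) S = (if k ∈ S then -1 else 1) * bFourier f S := by
  rw [bFourier, bFourier, bExpect, bExpect, ← mul_div_assoc]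
  congr 1
  calc ∑ x : Fin n → Bool, f (bFlip1 k x) * bChi S x
      = ∑ x : Fin n → Bool,
        (fun y => (if k ∈ S then (-1:ℝ) else 1) * (f y * bChi S y)) (bFlip1 k x) := by
        apply Finset.sum_congr rfl
        intro x _
        have hc := bChi_flip k S x
        simp only
        rw [hc, ← (bFlip1_involutive k) x]
        by_cases h : k ∈ S <;> simp [h] <;> ring
    _ = ∑ y : Fin n → Bool, (if k ∈ S then (-1:ℝ) else 1) * (f y * bChi S y) :=
        Function.Bijective.sum_comp ((bFlip1_involutive k).bijective)
          (fun y => (if k ∈ S then (-1:ℝ) else 1) * (f y * bChi S y))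
    _ = (if k ∈ S then -1 else 1) * ∑ x : Fin n → Bool, f x * bChi S x := by
        rw [Finset.mul_sum]

lemma bFourier_bD {n : ℕ} (k : Fin n) (f : (Fin n → Bool) → ℝ) (S : Finset (Fin n)) :
    bFourier (bD k f) S = if k ∈ S then bFourier f S else 0 := by
  have : bFourier (bD k f) S
      = (bFourier f S - bFourier (fun x => f (bFlip1 k x)) S) / 2 := by
    rw [bFourier, bFourier, bFourier, bExpect, bExpect, bExpect]
    have hpt : ∀ x : Fin n → Bool, bD k f x * bChi S x
        = (f x * bChi S x - f (bFlip1 k x) * bChi S x) / 2 := by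
      intro x; rw [bD]; ring
    simp only [hpt]
    rw [← Finset.sum_div, Finset.sum_sub_distrib]
    ring
  rw [this, bFourier_comp_flip]
  by_cases h : k ∈ S <;> simp [h] <;> ring

lemma bD_values {n : ℕ} (k : Fin n) (f : (Fin n → Bool) → ℝ) (hf : IsBooleanFn f) :
    ∀ x, bD k f x = 0 ∨ bD k f x = 1 ∨ bD k f x = -1 := by
  intro x
  rcases hf x with h1 | h1 <;> rcases hf (bFlip1 k x) with h2 | h2 <;>
    simp [bD, h1, h2] <;> norm_num

lemma bExpect_sq {n : ℕ} (g : (Fin n → Bool) → ℝ) :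
    bExpect (fun x => g x ^ 2) = ∑ S : Finset (Fin n), bFourier g S ^ 2 := by
  have := bParseval g g
  simp only [← sq] at this
  exact this

lemma sum_sq_bFourier_bD {n : ℕ} (k : Fin n) (f : (Fin n → Bool) → ℝ) :
    ∑ S : Finset (Fin n), bFourier (bD k f) S ^ 2 = inflS f k := by
  rw [inflS, Finset.sum_filter]
  apply Finset.sum_congr rfl
  intro S _
  rw [bFourier_bD]
  by_cases h : k ∈ S <;> simp [h]

lemma inflS_nonneg {n : ℕ} (k : Fin n) (f : (Fin n → Bool) → ℝ) : 0 ≤ inflS f k :=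
  Finset.sum_nonneg (fun S _ => sq_nonneg _)

noncomputable def chiF {n : ℕ} (s : Fin n → Bool) (x : Fin n → Bool) : ℝ :=
  ∏ i, if s i then bSgn (x i) else 1

noncomputable def wF {n : ℕ} (s : Fin n → Bool) : ℝ :=
  ∏ i, if s i then (3:ℝ) else 1

lemma chiF_cons {n : ℕ} (c : Bool) (t : Fin n → Bool) (b : Bool) (y : Fin n → Bool) :
    chiF (Fin.cons c t) (Fin.cons b y) = (if c then bSgn b else 1) * chiF t y := by
  rw [chiF, chiF, Fin.prod_univ_succ]
  simp [Fin.cons_zero, Fin.cons_succ]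

lemma wF_cons {n : ℕ} (c : Bool) (t : Fin n → Bool) :
    wF (Fin.cons c t) = (if c then (3:ℝ) else 1) * wF t := by
  rw [wF, wF, Fin.prod_univ_succ]
  simp [Fin.cons_zero, Fin.cons_succ]

lemma wF_nonneg {n : ℕ} (s : Fin n → Bool) : 0 ≤ wF s := by
  rw [wF]; apply Finset.prod_nonneg; intro i _; split <;> norm_num

lemma hypF : ∀ (n : ℕ) (a : (Fin n → Bool) → ℝ),
    ∑ x : Fin n → Bool, (∑ s : Fin n → Bool, a s * chiF s x)^4
      ≤ 2^n * (∑ s : Fin n → Bool, wF s * a s^2)^2 := by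
  intro n
  induction n with
  | zero =>
    intro a
    have hu : ∀ s x : Fin 0 → Bool, chiF s x = 1 := by
      intro s x; rw [chiF]; simp
    have hw : ∀ s : Fin 0 → Bool, wF s = 1 := by
      intro s; rw [wF]; simp
    simp only [hu, hw]
    rw [Fintype.sum_subsingleton _ (fun _ => false), Fintype.sum_subsingleton _ (fun _ => false),
      Fintype.sum_subsingleton _ (fun _ => false)]
    ring_nf
    norm_num
  | succ n IH =>
    intro a
    -- reindex x and s by Fin.cons
    set e : (Bool × (Fin n → Bool)) ≃ (Fin (n+1) → Bool) := Fin.consEquiv (fun _ => Bool) with he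
    set u : (Fin n → Bool) → ℝ := fun y => ∑ t : Fin n → Bool, a (Fin.cons false t) * chiF t y with hu
    set v : (Fin n → Bool) → ℝ := fun y => ∑ t : Fin n → Bool, a (Fin.cons true t) * chiF t y with hv
    set A : ℝ := ∑ t : Fin n → Bool, wF t * a (Fin.cons false t)^2 with hA
    set B : ℝ := ∑ t : Fin n → Bool, wF t * a (Fin.cons true t)^2 with hB
    have hinner : ∀ (b : Bool) (y : Fin n → Bool),
        ∑ s : Fin (n+1) → Bool, a s * chiF s (Fin.cons b y)
          = u y + bSgn b * v y := by
      intro b y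
      rw [← Fintype.sum_equiv e
        (fun p : Bool × (Fin n → Bool) => a (Fin.cons p.1 p.2) * chiF (Fin.cons p.1 p.2) (Fin.cons b y))
        (fun s => a s * chiF s (Fin.cons b y)) (fun p => rfl)]
      rw [Fintype.sum_prod_type]
      rw [Fintype.sum_bool]
      simp only [chiF_cons, if_pos, if_neg]
      rw [hu, hv]
      simp only
      rw [Finset.mul_sum]
      rw [add_comm]
      congr 1
      · apply Finset.sum_congr rfl; intro t _; simp
      · apply Finset.sum_congr rfl; intro t _; simp [mul_comm, mul_assoc, mul_left_comm]
    have hW : ∑ s : Fin (n+1) → Bool, wF s * a s ^2 = A + 3 * B := by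
      rw [← Fintype.sum_equiv e
        (fun p : Bool × (Fin n → Bool) => wF (Fin.cons p.1 p.2) * a (Fin.cons p.1 p.2)^2)
        (fun s => wF s * a s^2) (fun p => rfl)]
      rw [Fintype.sum_prod_type, Fintype.sum_bool, hA, hB]
      simp only [wF_cons]
      rw [Finset.mul_sum]
      rw [add_comm]
      congr 1
      · apply Finset.sum_congr rfl; intro t _; simp
      · apply Finset.sum_congr rfl; intro t _; simp; ring
    have hL : ∑ x : Fin (n+1) → Bool, (∑ s : Fin (n+1) → Bool, a s * chiF s x)^4
        = ∑ y : Fin n → Bool, ((u y + v y)^4 + (u y - v y)^4) := by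
      rw [← Fintype.sum_equiv e
        (fun p : Bool × (Fin n → Bool) =>
          (∑ s : Fin (n+1) → Bool, a s * chiF s (Fin.cons p.1 p.2))^4)
        (fun x => (∑ s : Fin (n+1) → Bool, a s * chiF s x)^4) (fun p => rfl)]
      rw [Fintype.sum_prod_type, Fintype.sum_bool]
      rw [← Finset.sum_add_distrib]
      apply Finset.sum_congr rfl
      intro y _
      rw [hinner, hinner]
      simp [bSgn]
      ring
    have hIHu : ∑ y : Fin n → Bool, (u y)^4 ≤ 2^n * A^2 := IH _
    have hIHv : ∑ y : Fin n → Bool, (v y)^4 ≤ 2^n * B^2 := IH _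
    have hA0 : 0 ≤ A := Finset.sum_nonneg (fun t _ => mul_nonneg (wF_nonneg t) (sq_nonneg _))
    have hB0 : 0 ≤ B := Finset.sum_nonneg (fun t _ => mul_nonneg (wF_nonneg t) (sq_nonneg _))
    have hcross : ∑ y : Fin n → Bool, (u y)^2 * (v y)^2 ≤ 2^n * (A * B) := by
      have h1 : (∑ y : Fin n → Bool, (u y)^2 * (v y)^2)^2
          ≤ (∑ y : Fin n → Bool, (u y)^4) * (∑ y : Fin n → Bool, (v y)^4) := by
        have := Finset.sum_mul_sq_le_sq_mul_sq Finset.univ (fun y => (u y)^2) (fun y => (v y)^2)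
        calc (∑ y : Fin n → Bool, (u y)^2 * (v y)^2)^2
            ≤ (∑ y : Fin n → Bool, ((u y)^2)^2) * (∑ y : Fin n → Bool, ((v y)^2)^2) := this
          _ = (∑ y : Fin n → Bool, (u y)^4) * (∑ y : Fin n → Bool, (v y)^4) := by
              congr 1 <;> (apply Finset.sum_congr rfl; intro y _; ring)
      have h2 : (∑ y : Fin n → Bool, (u y)^2 * (v y)^2)^2 ≤ (2^n * (A*B))^2 := by
        calc (∑ y : Fin n → Bool, (u y)^2 * (v y)^2)^2
            ≤ (∑ y : Fin n → Bool, (u y)^4) * (∑ y : Fin n → Bool, (v y)^4) := h1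
          _ ≤ (2^n * A^2) * (2^n * B^2) := by
              apply mul_le_mul hIHu hIHv
                (Finset.sum_nonneg (fun y _ => by positivity)) (by positivity)
          _ = (2^n * (A*B))^2 := by ring
      have h3 : 0 ≤ ∑ y : Fin n → Bool, (u y)^2 * (v y)^2 :=
        Finset.sum_nonneg (fun y _ => by positivity)
      have h4 : (0:ℝ) ≤ 2^n * (A*B) := by positivity
      exact (pow_le_pow_iff_left₀ h3 h4 (by norm_num)).mp h2
    rw [hL, hW]
    have expand : ∑ y : Fin n → Bool, ((u y + v y)^4 + (u y - v y)^4)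
        = 2 * (∑ y : Fin n → Bool, (u y)^4) + 12 * (∑ y : Fin n → Bool, (u y)^2 * (v y)^2)
          + 2 * (∑ y : Fin n → Bool, (v y)^4) := by
      rw [Finset.mul_sum, Finset.mul_sum, Finset.mul_sum]
      rw [← Finset.sum_add_distrib, ← Finset.sum_add_distrib]
      apply Finset.sum_congr rfl
      intro y _
      ring
    rw [expand]
    have hfin : 2 * (2^n * A^2) + 12 * (2^n * (A*B)) + 2 * (2^n * B^2)
        ≤ 2^(n+1) * (A + 3*B)^2 := by
      have h2s : (2:ℝ)^(n+1) = 2 * 2^n := by ring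
      rw [h2s]
      nlinarith [mul_nonneg (le_of_lt (pow_pos (by norm_num : (0:ℝ) < 2) n)) (sq_nonneg B)]
    calc 2 * (∑ y : Fin n → Bool, (u y)^4) + 12 * (∑ y : Fin n → Bool, (u y)^2 * (v y)^2)
          + 2 * (∑ y : Fin n → Bool, (v y)^4)
        ≤ 2 * (2^n * A^2) + 12 * (2^n * (A*B)) + 2 * (2^n * B^2) := by
          have := hcross
          linarith [hIHu, hIHv, hcross]
      _ ≤ 2^(n+1) * (A + 3*B)^2 := hfin


noncomputable def eFS {n : ℕ} : Finset (Fin n) ≃ (Fin n → Bool) where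
  toFun := fun S i => decide (i ∈ S)
  invFun := fun s => univ.filter (fun i => s i = true)
  left_inv := by intro S; ext i; simp
  right_inv := by intro s; funext i; simp

lemma chiF_eFS {n : ℕ} (S : Finset (Fin n)) (x : Fin n → Bool) :
    chiF (eFS S) x = bChi S x := by
  rw [chiF, bChi]
  have : ∀ i : Fin n, (if (eFS S) i then bSgn (x i) else 1)
      = (if i ∈ S then bSgn (x i) else 1) := by
    intro i; simp [eFS]
  rw [Finset.prod_congr rfl (fun i _ => this i), ← Finset.prod_filter]
  congr 1
  simp [Finset.filter_mem_eq_inter]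

lemma wF_eFS {n : ℕ} (S : Finset (Fin n)) : wF (eFS S) = (3:ℝ)^S.card := by
  rw [wF]
  have : ∀ i : Fin n, (if (eFS S) i then (3:ℝ) else 1)
      = (if i ∈ S then (3:ℝ) else 1) := by
    intro i; simp [eFS]
  rw [Finset.prod_congr rfl (fun i _ => this i), ← Finset.prod_filter]
  rw [Finset.prod_const]
  congr 1
  simp [Finset.filter_mem_eq_inter]

lemma hyperc {n : ℕ} (a : Finset (Fin n) → ℝ) :
    bExpect (fun x => (∑ S : Finset (Fin n), a S * bChi S x)^4)
      ≤ (∑ S : Finset (Fin n), (3:ℝ)^S.card * a S ^ 2)^2 := by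
  classical
  set aF : (Fin n → Bool) → ℝ := fun s => a (eFS.symm s) with haF
  have h1 : ∀ x, ∑ S : Finset (Fin n), a S * bChi S x
      = ∑ s : Fin n → Bool, aF s * chiF s x := by
    intro x
    apply Fintype.sum_equiv eFS
    intro S
    rw [haF]
    simp only [Equiv.symm_apply_apply, chiF_eFS]
  have h2 : ∑ S : Finset (Fin n), (3:ℝ)^S.card * a S ^ 2
      = ∑ s : Fin n → Bool, wF s * aF s ^ 2 := by
    apply Fintype.sum_equiv eFS
    intro S
    rw [haF]
    simp only [Equiv.symm_apply_apply, wF_eFS]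
  simp only [h1, h2]
  rw [bExpect, div_le_iff₀ (by positivity : (0:ℝ) < 2^n)]
  calc ∑ x : Fin n → Bool, (∑ s : Fin n → Bool, aF s * chiF s x)^4
      ≤ 2^n * (∑ s : Fin n → Bool, wF s * aF s^2)^2 := hypF n aF
    _ = (∑ s : Fin n → Bool, wF s * aF s^2)^2 * 2^n := by ring

/-- KKL core estimate for one coordinate -/
lemma kkl_core {n : ℕ} (k : Fin n) (f : (Fin n → Bool) → ℝ) (hf : IsBooleanFn f) :
    (∑ S ∈ univ.filter (fun S : Finset (Fin n) => k ∈ S),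
        (3:ℝ)⁻¹^S.card * bFourier f S ^ 2) ^ 2 ≤ (inflS f k)^3 := by
  classical
  set g := bD k f with hgdef
  set a : Finset (Fin n) → ℝ := fun S => (3:ℝ)⁻¹^S.card * bFourier g S with hadef
  set h : (Fin n → Bool) → ℝ := fun x => ∑ S : Finset (Fin n), a S * bChi S x with hhdef
  set X : ℝ := ∑ S : Finset (Fin n), (3:ℝ)⁻¹^S.card * bFourier g S ^ 2 with hXdef
  set I : ℝ := inflS f k with hIdef
  -- goal in terms of X
  have hgoal : ∑ S ∈ univ.filter (fun S : Finset (Fin n) => k ∈ S),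
      (3:ℝ)⁻¹^S.card * bFourier f S ^ 2 = X := by
    rw [hXdef, Finset.sum_filter]
    apply Finset.sum_congr rfl
    intro S _
    rw [hgdef, bFourier_bD]
    by_cases hk : k ∈ S <;> simp [hk]
  rw [hgoal]
  have hX0 : 0 ≤ X := Finset.sum_nonneg (fun S _ => by positivity)
  have hI0 : 0 ≤ I := inflS_nonneg k f
  -- E[g*h] = X
  have hEgh : bExpect (fun x => g x * h x) = X := by
    rw [bParseval g h, hXdef]
    apply Finset.sum_congr rfl
    intro S _
    rw [hhdef, bFourier_combo a S, hadef]
    ring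
  -- E[g^2] = I
  have hEg2 : bExpect (fun x => g x ^ 2) = I := by
    rw [bExpect_sq, hgdef, sum_sq_bFourier_bD, hIdef]
  -- hypercontractivity : E[h^4] ≤ X^2
  have hEh4 : bExpect (fun x => h x ^ 4) ≤ X ^ 2 := by
    calc bExpect (fun x => h x ^ 4) ≤ (∑ S : Finset (Fin n), (3:ℝ)^S.card * a S ^ 2)^2 :=
          hyperc a
      _ = X ^ 2 := by
        congr 1
        rw [hXdef]
        apply Finset.sum_congr rfl
        intro S _
        rw [hadef]
        have h3 : (3:ℝ)^S.card * ((3:ℝ)⁻¹^S.card * bFourier g S)^2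
            = ((3:ℝ)^S.card * ((3:ℝ)⁻¹^S.card)^2) * bFourier g S ^2 := by ring
        rw [h3, inv_pow]
        have ht : ((3:ℝ)^S.card) ≠ 0 := by positivity
        field_simp
  -- Hölder chain
  have hhol := holder3 g h (bD_values k f hf)
  -- convert to expectation form
  have hPN : (0:ℝ) < 2^n := by positivity
  have hmain : X ^ 4 ≤ I ^ 3 * X ^ 2 := by
    have e1 : (∑ x : Fin n → Bool, g x * h x) = X * 2^n := by
      rw [← hEgh, bExpect, div_mul_cancel₀]
      exact ne_of_gt hPN
    have e2 : (∑ x : Fin n → Bool, g x ^ 2) = I * 2^n := by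
      rw [← hEg2, bExpect, div_mul_cancel₀]
      exact ne_of_gt hPN
    have e3 : (∑ x : Fin n → Bool, h x ^ 4) = bExpect (fun x => h x ^ 4) * 2^n := by
      rw [bExpect, div_mul_cancel₀]
      exact ne_of_gt hPN
    rw [e1, e2, e3] at hhol
    set P : ℝ := 2^n with hPdef
    have c1 : (I*P)^3 * (bExpect (fun x => h x ^ 4) * P) ≤ (I*P)^3 * (X^2*P) := by
      apply mul_le_mul_of_nonneg_left
        (mul_le_mul_of_nonneg_right hEh4 (le_of_lt hPN))
      positivity
    have c3 : X^4 * P^4 ≤ I^3 * X^2 * P^4 := by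
      calc X^4 * P^4 = (X*P)^4 := by ring
        _ ≤ (I*P)^3 * (bExpect (fun x => h x ^ 4) * P) := hhol
        _ ≤ (I*P)^3 * (X^2*P) := c1
        _ = I^3 * X^2 * P^4 := by ring
    exact le_of_mul_le_mul_right c3 (by positivity)
  rcases eq_or_lt_of_le hX0 with hX | hX
  · rw [← hX]
    norm_num
    exact pow_nonneg hI0 3
  · have hc : X^2 * X^2 ≤ I^3 * X^2 := by
      calc X^2 * X^2 = X^4 := by ring
        _ ≤ I^3 * X^2 := hmain
    exact le_of_mul_le_mul_right hc (pow_pos hX 2)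

lemma double_count {n : ℕ} (g : Finset (Fin n) → ℝ) :
    ∑ k : Fin n, ∑ S ∈ univ.filter (fun S : Finset (Fin n) => k ∈ S), g S
      = ∑ S : Finset (Fin n), (S.card : ℝ) * g S := by
  simp only [Finset.sum_filter]
  rw [Finset.sum_comm]
  apply Finset.sum_congr rfl
  intro S _
  rw [← Finset.sum_filter]
  have : univ.filter (fun k => k ∈ S) = S := by
    ext k; simp
  rw [this, Finset.sum_const, nsmul_eq_mul]

lemma totInfl_eq_sum {n : ℕ} (f : (Fin n → Bool) → ℝ) :
    ∑ k : Fin n, inflS f k = totInfl f := by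
  rw [totInfl, ← double_count]
  rfl

lemma sum_sq_eq_one {n : ℕ} (f : (Fin n → Bool) → ℝ) (hf : IsBooleanFn f) :
    ∑ S : Finset (Fin n), bFourier f S ^ 2 = 1 := by
  rw [← bExpect_sq]
  have : ∀ x, f x ^ 2 = 1 := by
    intro x; rcases hf x with h | h <;> rw [h] <;> norm_num
  simp only [this]
  rw [bExpect, Finset.sum_const, Finset.card_univ]
  simp [Fintype.card_fun]

lemma varF_nonneg {n : ℕ} (f : (Fin n → Bool) → ℝ) : 0 ≤ varF f :=
  Finset.sum_nonneg (fun S _ => sq_nonneg _)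

lemma varF_le_one {n : ℕ} (f : (Fin n → Bool) → ℝ) (hf : IsBooleanFn f) : varF f ≤ 1 := by
  rw [← sum_sq_eq_one f hf, varF]
  exact Finset.sum_le_sum_of_subset_of_nonneg (Finset.filter_subset _ _)
    (fun S _ _ => sq_nonneg _)

lemma varF_le_totInfl {n : ℕ} (f : (Fin n → Bool) → ℝ) : varF f ≤ totInfl f := by
  rw [varF, totInfl, Finset.sum_filter]
  apply Finset.sum_le_sum
  intro S _
  by_cases h : S = ∅
  · simp [h]
  · rw [if_pos h]
    have h1 : (1:ℝ) ≤ S.card := by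
      have := Finset.card_pos.mpr (Finset.nonempty_iff_ne_empty.mpr h)
      exact_mod_cast this
    nlinarith [sq_nonneg (bFourier f S)]

lemma totInfl_nonneg {n : ℕ} (f : (Fin n → Bool) → ℝ) : 0 ≤ totInfl f :=
  Finset.sum_nonneg (fun S _ => mul_nonneg (by positivity) (sq_nonneg _))

/-- the smoothed total influence -/
noncomputable def smInfl {n : ℕ} (f : (Fin n → Bool) → ℝ) : ℝ :=
  ∑ S : Finset (Fin n), (S.card : ℝ) * ((3:ℝ)⁻¹^S.card * bFourier f S ^ 2)

lemma smInfl_eq_sum {n : ℕ} (f : (Fin n → Bool) → ℝ) :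
    ∑ k : Fin n, ∑ S ∈ univ.filter (fun S : Finset (Fin n) => k ∈ S),
      (3:ℝ)⁻¹^S.card * bFourier f S ^ 2 = smInfl f := by
  rw [smInfl, ← double_count]

lemma smInfl_le {n : ℕ} (f : (Fin n → Bool) → ℝ) (hf : IsBooleanFn f) (δ : ℝ)
    (hδ0 : 0 ≤ δ) (hδ : ∀ k : Fin n, inflS f k ≤ δ) :
    smInfl f ≤ Real.sqrt δ * totInfl f := by
  rw [← smInfl_eq_sum, ← totInfl_eq_sum, Finset.mul_sum]
  apply Finset.sum_le_sum
  intro k _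
  set X : ℝ := ∑ S ∈ univ.filter (fun S : Finset (Fin n) => k ∈ S),
    (3:ℝ)⁻¹^S.card * bFourier f S ^ 2 with hX
  have hX0 : 0 ≤ X := Finset.sum_nonneg (fun S _ => by positivity)
  have hcore : X^2 ≤ (inflS f k)^3 := kkl_core k f hf
  have hI0 : 0 ≤ inflS f k := inflS_nonneg k f
  have h2 : X^2 ≤ (Real.sqrt δ * inflS f k)^2 := by
    have : (Real.sqrt δ * inflS f k)^2 = δ * (inflS f k)^2 := by
      rw [mul_pow, Real.sq_sqrt hδ0]
    rw [this]
    calc X^2 ≤ (inflS f k)^3 := hcore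
      _ = (inflS f k) * (inflS f k)^2 := by ring
      _ ≤ δ * (inflS f k)^2 := mul_le_mul_of_nonneg_right (hδ k) (sq_nonneg _)
  exact (pow_le_pow_iff_left₀ hX0 (mul_nonneg (Real.sqrt_nonneg _) hI0) (by norm_num)).mp h2

lemma kkl_split {n : ℕ} (f : (Fin n → Bool) → ℝ) (m : ℕ) (hm : 1 ≤ m) :
    varF f ≤ (3:ℝ)^m * smInfl f + totInfl f / m := by
  classical
  rw [varF, ← Finset.sum_filter_add_sum_filter_not
    (univ.filter (fun S : Finset (Fin n) => S ≠ ∅)) (fun S => S.card ≤ m)]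
  have hlow : ∑ S ∈ (univ.filter (fun S : Finset (Fin n) => S ≠ ∅)).filter
      (fun S => S.card ≤ m), bFourier f S ^ 2 ≤ (3:ℝ)^m * smInfl f := by
    rw [smInfl, Finset.mul_sum]
    have hsub : ∀ S ∈ (univ.filter (fun S : Finset (Fin n) => S ≠ ∅)).filter
        (fun S => S.card ≤ m), bFourier f S ^ 2
          ≤ (3:ℝ)^m * ((S.card : ℝ) * ((3:ℝ)⁻¹^S.card * bFourier f S ^ 2)) := by
      intro S hS
      simp only [Finset.mem_filter] at hS
      obtain ⟨⟨-, hne⟩, hcard⟩ := hS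
      have h1 : (1:ℝ) ≤ S.card := by
        exact_mod_cast Finset.card_pos.mpr (Finset.nonempty_iff_ne_empty.mpr hne)
      have h3 : (3:ℝ)^S.card ≤ (3:ℝ)^m := by
        apply pow_le_pow_right₀ (by norm_num) hcard
      have hpos : (0:ℝ) < (3:ℝ)^S.card := by positivity
      have key : (1:ℝ) ≤ (3:ℝ)^m * ((S.card : ℝ) * (3:ℝ)⁻¹^S.card) := by
        rw [inv_pow]
        calc (1:ℝ) = (3:ℝ)^S.card * ((3:ℝ)^S.card)⁻¹ := by field_simp
          _ ≤ (3:ℝ)^m * ((3:ℝ)^S.card)⁻¹ := by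
              apply mul_le_mul_of_nonneg_right h3 (by positivity)
          _ ≤ (3:ℝ)^m * ((S.card:ℝ) * ((3:ℝ)^S.card)⁻¹) := by
              apply mul_le_mul_of_nonneg_left _ (by positivity)
              nlinarith [inv_pos.mpr hpos]
      nlinarith [sq_nonneg (bFourier f S), key]
    calc ∑ S ∈ (univ.filter (fun S : Finset (Fin n) => S ≠ ∅)).filter
          (fun S => S.card ≤ m), bFourier f S ^ 2
        ≤ ∑ S ∈ (univ.filter (fun S : Finset (Fin n) => S ≠ ∅)).filter
          (fun S => S.card ≤ m),
          (3:ℝ)^m * ((S.card : ℝ) * ((3:ℝ)⁻¹^S.card * bFourier f S ^ 2)) :=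
          Finset.sum_le_sum hsub
      _ ≤ ∑ S : Finset (Fin n),
          (3:ℝ)^m * ((S.card : ℝ) * ((3:ℝ)⁻¹^S.card * bFourier f S ^ 2)) := by
          apply Finset.sum_le_sum_of_subset_of_nonneg (Finset.subset_univ _)
          intro S _ _
          positivity
  have htail : ∑ S ∈ (univ.filter (fun S : Finset (Fin n) => S ≠ ∅)).filter
      (fun S => ¬ S.card ≤ m), bFourier f S ^ 2 ≤ totInfl f / m := by
    rw [totInfl, div_eq_inv_mul, Finset.mul_sum]
    have hsub : ∀ S ∈ (univ.filter (fun S : Finset (Fin n) => S ≠ ∅)).filter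
        (fun S => ¬ S.card ≤ m), bFourier f S ^ 2
          ≤ (m:ℝ)⁻¹ * ((S.card : ℝ) * bFourier f S ^ 2) := by
      intro S hS
      simp only [Finset.mem_filter, not_le] at hS
      have hcard : (m:ℝ) < S.card := by exact_mod_cast hS.2
      have hm0 : (0:ℝ) < m := by exact_mod_cast hm
      rw [← mul_assoc]
      have : (1:ℝ) ≤ (m:ℝ)⁻¹ * S.card := by
        rw [← div_eq_inv_mul, le_div_iff₀ hm0, one_mul]
        exact le_of_lt hcard
      nlinarith [sq_nonneg (bFourier f S)]
    calc ∑ S ∈ (univ.filter (fun S : Finset (Fin n) => S ≠ ∅)).filter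
          (fun S => ¬ S.card ≤ m), bFourier f S ^ 2
        ≤ ∑ S ∈ (univ.filter (fun S : Finset (Fin n) => S ≠ ∅)).filter
          (fun S => ¬ S.card ≤ m), (m:ℝ)⁻¹ * ((S.card : ℝ) * bFourier f S ^ 2) :=
          Finset.sum_le_sum hsub
      _ ≤ ∑ S : Finset (Fin n), (m:ℝ)⁻¹ * ((S.card : ℝ) * bFourier f S ^ 2) := by
          apply Finset.sum_le_sum_of_subset_of_nonneg (Finset.subset_univ _)
          intro S _ _
          positivity
  linarith [hlow, htail]

set_option maxHeartbeats 2000000 in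
theorem kkl_theorem :
    ∃ c : ℝ, 0 < c ∧ ∀ (n : ℕ), 2 ≤ n → ∀ f : (Fin n → Bool) → ℝ, IsBooleanFn f →
      ∃ k : Fin n, c * varF f * Real.log n / n ≤ inflS f k := by
  refine ⟨1/4096, by norm_num, ?_⟩
  intro n hn f hf
  have hnpos : 0 < n := by omega
  obtain ⟨k₀, -, hk₀⟩ :=
    Finset.exists_max_image (univ : Finset (Fin n)) (inflS f) ⟨⟨0, hnpos⟩, Finset.mem_univ _⟩
  refine ⟨k₀, ?_⟩
  set c : ℝ := 1/4096 with hc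
  set δ : ℝ := inflS f k₀ with hδdef
  set W : ℝ := varF f with hWdef
  set T : ℝ := totInfl f with hTdef
  set L : ℝ := Real.log n with hLdef
  have hc0 : (0:ℝ) < c := by rw [hc]; norm_num
  have hδ0 : 0 ≤ δ := by rw [hδdef]; exact inflS_nonneg k₀ f
  have hn0 : (0:ℝ) < n := by exact_mod_cast hnpos
  have hn1 : (1:ℝ) ≤ n := by exact_mod_cast hnpos
  have hL : 0 < L := by rw [hLdef]; exact Real.log_pos (by exact_mod_cast hn)
  have hW0 : 0 ≤ W := by rw [hWdef]; exact varF_nonneg f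
  rcases eq_or_lt_of_le hW0 with hWz | hW
  · -- variance zero
    rw [← hWz]
    simp only [mul_zero, zero_mul, zero_div]
    exact hδ0
  have hW1 : W ≤ 1 := by rw [hWdef]; exact varF_le_one f hf
  have hWT : W ≤ T := by rw [hWdef, hTdef]; exact varF_le_totInfl f
  have hT0 : 0 < T := lt_of_lt_of_le hW hWT
  have hδle : ∀ k : Fin n, inflS f k ≤ δ := fun k => hk₀ k (Finset.mem_univ k)
  have hTeq : ∑ k : Fin n, inflS f k = T := by rw [hTdef]; exact totInfl_eq_sum f
  have hsplitW := kkl_split f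
  have hsm' := smInfl_le f hf δ hδ0 hδle
  rw [← hTdef] at hsm'
  clear_value c δ W T L
  by_contra hcon
  push_neg at hcon
  have hTnδ : T ≤ n * δ := by
    rw [← hTeq]
    calc ∑ k : Fin n, inflS f k ≤ ∑ _k : Fin n, δ := Finset.sum_le_sum (fun k _ => hδle k)
      _ = n * δ := by
        rw [Finset.sum_const, Finset.card_univ, Fintype.card_fin, nsmul_eq_mul]
  have hTlt : T ≤ c * W * L := by
    have h1 : n * δ ≤ n * (c * W * L / n) :=
      mul_le_mul_of_nonneg_left (le_of_lt hcon) (le_of_lt hn0)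
    have h2 : n * (c * W * L / n) = c * W * L := by field_simp
    calc T ≤ n * δ := hTnδ
      _ ≤ n * (c * W * L / n) := h1
      _ = c * W * L := h2
  -- choose m
  set m : ℕ := ⌈2*T/W⌉₊ with hmdef
  have hratio : (0:ℝ) < 2*T/W := div_pos (by linarith) hW
  have hm1 : 1 ≤ m := Nat.one_le_ceil_iff.mpr hratio
  have hmge : 2*T/W ≤ (m:ℝ) := Nat.le_ceil _
  have hmlt : (m:ℝ) < 2*T/W + 1 := Nat.ceil_lt_add_one (le_of_lt hratio)
  have hm2 : (2:ℝ) ≤ 2*T/W := by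
    rw [le_div_iff₀ hW]
    linarith
  clear_value m
  have hmR : (0:ℝ) < m := by linarith
  have htailm : T / m ≤ W / 2 := by
    have h1 : T / (m:ℝ) ≤ T / (2*T/W) :=
      div_le_div_of_nonneg_left (le_of_lt hT0) hratio hmge
    have h2 : T / (2*T/W) = W / 2 := by
      field_simp
    linarith
  have hsplit := hsplitW m hm1
  have hsm := hsm'
  have hsm0 : (0:ℝ) ≤ (3:ℝ)^m := by positivity
  have hmain : W / 2 ≤ (3:ℝ)^m * (Real.sqrt δ * T) := by
    have h1 : (3:ℝ)^m * smInfl f ≤ (3:ℝ)^m * (Real.sqrt δ * T) :=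
      mul_le_mul_of_nonneg_left hsm hsm0
    have := hsplit
    rw [← hTdef, ← hWdef] at this
    linarith [htailm]
  -- numeric bounds
  set r8 : ℝ := (n:ℝ)^((1:ℝ)/8) with hr8
  set r12 : ℝ := (n:ℝ)^((1:ℝ)/12) with hr12
  set r6 : ℝ := (n:ℝ)^((1:ℝ)/6) with hr6
  set r2 : ℝ := (n:ℝ)^((1:ℝ)/2) with hr2
  clear_value r8 r12 r6 r2
  have hr80 : 0 < r8 := by rw [hr8]; positivity
  have hr120 : 0 < r12 := by rw [hr12]; positivity
  have hr60 : 0 < r6 := by rw [hr6]; positivity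
  have hr20 : 0 < r2 := by rw [hr2]; positivity
  have hlog3 : Real.log 3 ≤ 2 := by
    have := Real.log_le_sub_one_of_pos (by norm_num : (0:ℝ) < 3)
    linarith
  have hlog6 : L ≤ 6 * r6 := by
    rw [hLdef, hr6]
    have h1 : Real.log ((n:ℝ)^((1:ℝ)/6)) = (1/6) * Real.log n := Real.log_rpow hn0 _
    have h2 : Real.log ((n:ℝ)^((1:ℝ)/6)) ≤ (n:ℝ)^((1:ℝ)/6) - 1 :=
      Real.log_le_sub_one_of_pos (by positivity)
    rw [h1] at h2
    linarith
  -- bound 3^m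
  have q1 : (3:ℝ)^m ≤ 3 * r8 := by
    have e1 : (3:ℝ)^m = (3:ℝ)^((m:ℕ):ℝ) := (Real.rpow_natCast 3 m).symm
    have e2 : (3:ℝ)^((m:ℕ):ℝ) ≤ (3:ℝ)^(2*c*L + 1) := by
      apply Real.rpow_le_rpow_of_exponent_le (by norm_num)
      have h1 : 2*T/W ≤ 2*c*L := by
        rw [div_le_iff₀ hW]
        nlinarith [hTlt]
      calc (m:ℝ) ≤ 2*T/W + 1 := le_of_lt hmlt
        _ ≤ 2*c*L + 1 := by linarith [h1]
    have e3 : (3:ℝ)^(2*c*L + 1) = (3:ℝ)^(2*c*L) * 3 := by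
      rw [Real.rpow_add (by norm_num : (0:ℝ) < 3), Real.rpow_one]
    have e4 : (3:ℝ)^(2*c*L) ≤ r8 := by
      rw [Real.rpow_def_of_pos (by norm_num : (0:ℝ) < 3), hr8,
        Real.rpow_def_of_pos hn0]
      apply Real.exp_le_exp.mpr
      have hll : Real.log 3 * L ≤ 2 * L := mul_le_mul_of_nonneg_right hlog3 (le_of_lt hL)
      rw [hc, ← hLdef]
      linarith [hll, hL]
    rw [e1]
    calc (3:ℝ)^((m:ℕ):ℝ) ≤ (3:ℝ)^(2*c*L + 1) := e2
      _ = (3:ℝ)^(2*c*L) * 3 := e3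
      _ ≤ r8 * 3 := mul_le_mul_of_nonneg_right e4 (by norm_num)
      _ = 3 * r8 := by ring
  -- bound sqrt δ
  have q2 : Real.sqrt δ ≤ r12 / r2 := by
    have h1 : δ ≤ c * L / n := by
      have hcL0' : (0:ℝ) ≤ c * L := mul_nonneg (le_of_lt hc0) (le_of_lt hL)
      have h2 : c * W * L ≤ c * L := by
        calc c * W * L = W * (c * L) := by ring
          _ ≤ 1 * (c * L) := mul_le_mul_of_nonneg_right hW1 hcL0'
          _ = c * L := by ring
      have h3 : c * W * L / n ≤ c * L / n := (div_le_div_iff_of_pos_right hn0).mpr h2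
      linarith [hcon]
    have hcL0 : (0:ℝ) ≤ c * L := mul_nonneg (le_of_lt hc0) (le_of_lt hL)
    have h4 : Real.sqrt δ ≤ Real.sqrt (c * L / n) := Real.sqrt_le_sqrt h1
    rw [Real.sqrt_div hcL0] at h4
    have h5 : Real.sqrt (c * L) ≤ r12 := by
      have h6 : c * L ≤ 6 * c * r6 := by
        calc c * L ≤ c * (6 * r6) := mul_le_mul_of_nonneg_left hlog6 (le_of_lt hc0)
          _ = 6 * c * r6 := by ring
      have h7 : Real.sqrt (c * L) ≤ Real.sqrt (6 * c * r6) := Real.sqrt_le_sqrt h6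
      have h6c : (0:ℝ) ≤ 6 * c := by nlinarith [hc0]
      have h8 : Real.sqrt (6 * c * r6) = Real.sqrt (6 * c) * Real.sqrt r6 := by
        rw [Real.sqrt_mul h6c]
      have h9 : Real.sqrt (6 * c) ≤ 1 := Real.sqrt_le_one.mpr (by rw [hc]; norm_num)
      have h10 : Real.sqrt r6 = r12 := by
        rw [hr6, Real.sqrt_eq_rpow, ← Real.rpow_mul (le_of_lt hn0), hr12]
        norm_num
      calc Real.sqrt (c * L) ≤ Real.sqrt (6 * c * r6) := h7
        _ = Real.sqrt (6 * c) * Real.sqrt r6 := h8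
        _ ≤ 1 * Real.sqrt r6 := mul_le_mul_of_nonneg_right h9 (Real.sqrt_nonneg _)
        _ = r12 := by rw [one_mul, h10]
    have h11 : Real.sqrt (n:ℝ) = r2 := by
      rw [hr2, Real.sqrt_eq_rpow]
    calc Real.sqrt δ ≤ Real.sqrt (c*L) / Real.sqrt (n:ℝ) := h4
      _ ≤ r12 / r2 := by
          rw [h11]
          exact (div_le_div_iff_of_pos_right hr20).mpr h5
  have q3 : T ≤ 6 * c * W * r6 := by
    have h1 : (c*W) * L ≤ (c*W) * (6 * r6) :=
      mul_le_mul_of_nonneg_left hlog6 (mul_nonneg (le_of_lt hc0) hW0)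
    nlinarith [hTlt, h1]
  have hpow : r8 * r12 * r6 ≤ r2 := by
    rw [hr8, hr12, hr6, hr2, ← Real.rpow_add hn0, ← Real.rpow_add hn0]
    apply Real.rpow_le_rpow_of_exponent_le hn1
    norm_num
  have hdiv1 : r8 * r12 * r6 / r2 ≤ 1 := by
    rw [div_le_one hr20]
    exact hpow
  have hfinal : W / 2 ≤ 18 * c * W := by
    have s0 : (0:ℝ) ≤ Real.sqrt δ * T := mul_nonneg (Real.sqrt_nonneg _) (le_of_lt hT0)
    calc W / 2 ≤ (3:ℝ)^m * (Real.sqrt δ * T) := hmain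
      _ ≤ (3 * r8) * (Real.sqrt δ * T) := mul_le_mul_of_nonneg_right q1 s0
      _ ≤ (3 * r8) * ((r12 / r2) * T) := by
          apply mul_le_mul_of_nonneg_left _ (by linarith [hr80])
          exact mul_le_mul_of_nonneg_right q2 (le_of_lt hT0)
      _ ≤ (3 * r8) * ((r12 / r2) * (6 * c * W * r6)) := by
          apply mul_le_mul_of_nonneg_left _ (by linarith [hr80])
          exact mul_le_mul_of_nonneg_left q3 (le_of_lt (div_pos hr120 hr20))
      _ = 18 * c * W * (r8 * r12 * r6 / r2) := by ring
      _ ≤ 18 * c * W * 1 :=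
          mul_le_mul_of_nonneg_left hdiv1
            (mul_nonneg (mul_nonneg (by norm_num) (le_of_lt hc0)) hW0)
      _ = 18 * c * W := by ring
  rw [hc] at hfinal
  linarith
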